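/- arXiv:hep-th/9412207 — 2 statements merged into one kernel-verified Lean document; each statement's English description precedes it below -/
import Mathlib

section
/- If R ∈ End(V ⊗ V) is a generalized quantum R-matrix (weight-zero, unitary, solving the modified Yang–Baxter equation), then the face weights W(a,b,c,d,z) = (E[c−b]⊗E[b−a]) R(z, ηa+ηc)|_{V[d−a]⊗V[c−d]} satisfy the star-triangle relation Σ_g W(b,c,d,g,z₁₂)^{(12)} W(a,b,g,f,z₁₃)^{(13)} W(f,g,d,e,z₂₃)^{(23)} = Σ_g W(a,b,c,g,z₂₃)^{(23)} W(g,c,d,e,z₁₃)^{(13)} W(a,g,e,f,z₁₂)^{(12)} on V[f−a] ⊗ V[e−f] ⊗ V[d−e]. -/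
open Matrix Filter Topology
open scoped BigOperators

noncomputable section

/- The Cartan subalgebra `𝔥` is identified with `ℂ^m = Fin m → ℂ` via an
orthonormal basis `(h_ν)`; a diagonalizable `𝔥`-module is a space `ℂ^ι`
together with a weight function `wt : ι → (Fin m → ℂ)`; `λ ∈ 𝔥` acts on the
basis vector `i` by the scalar `⟨wt i, λ⟩ = Σ_ν (wt i) ν * λ ν`. -/

variable {m : ℕ}

/-- pairing `⟨μ, X⟩` of a weight with an element of `𝔥`. -/
def pairH (μ X : Fin m → ℂ) : ℂ := ∑ ν, μ ν * X ν

section Emb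

variable {α β γ : Type*} [Fintype α] [Fintype β] [Fintype γ]
variable [DecidableEq α] [DecidableEq β] [DecidableEq γ]

/-- `F(λ + c h^{(3)})` acting on factors 1,2 of a triple tensor product:
`f(λ + c h^{(k)}) = Σ_μ P_μ^{(k)} f(λ + c μ)` via the weight projections. -/
def emb12sh (wt : γ → (Fin m → ℂ)) (c : ℂ)
    (F : (Fin m → ℂ) → Matrix (α × β) (α × β) ℂ) (lam : Fin m → ℂ) :
    Matrix (α × β × γ) (α × β × γ) ℂ :=
  fun p q => F (lam + c • wt p.2.2) (p.1, p.2.1) (q.1, q.2.1) *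
    (if p.2.2 = q.2.2 then 1 else 0)

/-- `F(λ + c h^{(2)})` acting on factors 1,3. -/
def emb13sh (wt : β → (Fin m → ℂ)) (c : ℂ)
    (F : (Fin m → ℂ) → Matrix (α × γ) (α × γ) ℂ) (lam : Fin m → ℂ) :
    Matrix (α × β × γ) (α × β × γ) ℂ :=
  fun p q => F (lam + c • wt p.2.1) (p.1, p.2.2) (q.1, q.2.2) *
    (if p.2.1 = q.2.1 then 1 else 0)

/-- `F(λ + c h^{(1)})` acting on factors 2,3. -/
def emb23sh (wt : α → (Fin m → ℂ)) (c : ℂ)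
    (F : (Fin m → ℂ) → Matrix (β × γ) (β × γ) ℂ) (lam : Fin m → ℂ) :
    Matrix (α × β × γ) (α × β × γ) ℂ :=
  fun p q => F (lam + c • wt p.1) (p.2.1, p.2.2) (q.2.1, q.2.2) *
    (if p.1 = q.1 then 1 else 0)

/-- plain (unshifted) embedding into factors 1,2. -/
def emb12p (M : Matrix (α × β) (α × β) ℂ) : Matrix (α × β × γ) (α × β × γ) ℂ :=
  fun p q => M (p.1, p.2.1) (q.1, q.2.1) * (if p.2.2 = q.2.2 then 1 else 0)

/-- plain embedding into factors 1,3. -/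
def emb13p (M : Matrix (α × γ) (α × γ) ℂ) : Matrix (α × β × γ) (α × β × γ) ℂ :=
  fun p q => M (p.1, p.2.2) (q.1, q.2.2) * (if p.2.1 = q.2.1 then 1 else 0)

/-- plain embedding into factors 2,3. -/
def emb23p (M : Matrix (β × γ) (β × γ) ℂ) : Matrix (α × β × γ) (α × β × γ) ℂ :=
  fun p q => M (p.2.1, p.2.2) (q.2.1, q.2.2) * (if p.1 = q.1 then 1 else 0)

/-- weight-zero condition on a matrix on a two-fold tensor product:
`[X^{(1)} + X^{(2)}, F] = 0` for all `X ∈ 𝔥`. -/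
def WeightZero2 (wtA : α → (Fin m → ℂ)) (wtB : β → (Fin m → ℂ))
    (F : Matrix (α × β) (α × β) ℂ) : Prop :=
  ∀ X : Fin m → ℂ,
    Matrix.diagonal (fun p : α × β => pairH (wtA p.1) X + pairH (wtB p.2) X) * F =
    F * Matrix.diagonal (fun p : α × β => pairH (wtA p.1) X + pairH (wtB p.2) X)

end Emb

section RMat

variable {ι : Type*} [Fintype ι] [DecidableEq ι]

/-- the flip `P` of `V ⊗ V`. -/
def flipP : Matrix (ι × ι) (ι × ι) ℂ := fun p q => if p.1 = q.2 ∧ p.2 = q.1 then 1 else 0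

/-- the modified (dynamical) Yang–Baxter equation
`R^{(12)}(z₁₂,λ+ηh^{(3)}) R^{(13)}(z₁₃,λ−ηh^{(2)}) R^{(23)}(z₂₃,λ+ηh^{(1)}) =
 R^{(23)}(z₂₃,λ−ηh^{(1)}) R^{(13)}(z₁₃,λ+ηh^{(2)}) R^{(12)}(z₁₂,λ−ηh^{(3)})`. -/
def MYBE (wt : ι → (Fin m → ℂ)) (η : ℂ)
    (R : ℂ → (Fin m → ℂ) → Matrix (ι × ι) (ι × ι) ℂ) : Prop :=
  ∀ z₁ z₂ z₃ lam,
    emb12sh wt η (R (z₁ - z₂)) lam * emb13sh wt (-η) (R (z₁ - z₃)) lam *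
        emb23sh wt η (R (z₂ - z₃)) lam =
      emb23sh wt (-η) (R (z₂ - z₃)) lam * emb13sh wt η (R (z₁ - z₃)) lam *
        emb12sh wt (-η) (R (z₁ - z₂)) lam

/-- unitarity `R^{(12)}(z,λ) R^{(21)}(−z,λ) = Id`. -/
def RUnitary (R : ℂ → (Fin m → ℂ) → Matrix (ι × ι) (ι × ι) ℂ) : Prop :=
  ∀ z lam, R z lam * (flipP * R (-z) lam * flipP) = 1

/-- a generalized quantum R-matrix: a weight-zero unitary solution of the
modified Yang–Baxter equation. -/
def IsGenR (wt : ι → (Fin m → ℂ)) (η : ℂ)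
    (R : ℂ → (Fin m → ℂ) → Matrix (ι × ι) (ι × ι) ℂ) : Prop :=
  MYBE wt η R ∧ RUnitary R ∧ ∀ z lam, WeightZero2 wt wt (R z lam)

end RMat

section Rep

variable {ι κ : Type*} [Fintype ι] [DecidableEq ι] [Fintype κ] [DecidableEq κ]

/-- the RLL relation defining representations of the elliptic quantum group
`A(R)`:
`R^{(12)}(z₁₂,λ+ηh^{(3)}) L^{(13)}(z₁,λ−ηh^{(2)}) L^{(23)}(z₂,λ+ηh^{(1)}) =
 L^{(23)}(z₂,λ−ηh^{(1)}) L^{(13)}(z₁,λ+ηh^{(2)}) R^{(12)}(z₁₂,λ−ηh^{(3)})`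
in `End(V ⊗ V ⊗ W)`. -/
def RLL (wt : ι → (Fin m → ℂ)) (wtW : κ → (Fin m → ℂ)) (η : ℂ)
    (R : ℂ → (Fin m → ℂ) → Matrix (ι × ι) (ι × ι) ℂ)
    (L : ℂ → (Fin m → ℂ) → Matrix (ι × κ) (ι × κ) ℂ) : Prop :=
  ∀ z₁ z₂ lam,
    emb12sh wtW η (R (z₁ - z₂)) lam * emb13sh wt (-η) (L z₁) lam *
        emb23sh wt η (L z₂) lam =
      emb23sh wt (-η) (L z₂) lam * emb13sh wt η (L z₁) lam *
        emb12sh wtW (-η) (R (z₁ - z₂)) lam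

/-- a representation of `A(R)`: a weight-zero `L`-operator satisfying `RLL`. -/
def IsRep (wt : ι → (Fin m → ℂ)) (wtW : κ → (Fin m → ℂ)) (η : ℂ)
    (R : ℂ → (Fin m → ℂ) → Matrix (ι × ι) (ι × ι) ℂ)
    (L : ℂ → (Fin m → ℂ) → Matrix (ι × κ) (ι × κ) ℂ) : Prop :=
  RLL wt wtW η R L ∧ ∀ z lam, WeightZero2 wt wtW (L z lam)

end Rep

section Face

variable {ι : Type*} [Fintype ι] [DecidableEq ι]

/-- the projection `E[μ] ⊗ E[ν]` onto `V[μ] ⊗ V[ν]` inside `V ⊗ V`. -/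
def projK (wt : ι → (Fin m → ℂ)) (μ ν : Fin m → ℂ) :
    Matrix (ι × ι) (ι × ι) ℂ :=
  Matrix.diagonal (fun p =>
    (if wt p.1 = μ then 1 else 0) * (if wt p.2 = ν then 1 else 0))

/-- the face (Boltzmann) weight
`W(a,b,c,d,z,λ) = (E[c−b]⊗E[b−a]) R(z, λ+ηa+ηc)|_{V[d−a]⊗V[c−d]}`. -/
def face (wt : ι → (Fin m → ℂ)) (η : ℂ)
    (R : ℂ → (Fin m → ℂ) → Matrix (ι × ι) (ι × ι) ℂ)
    (a b c d : Fin m → ℂ) (z : ℂ) (lam : Fin m → ℂ) :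
    Matrix (ι × ι) (ι × ι) ℂ :=
  projK wt (c - b) (b - a) * R z (lam + η • a + η • c) * projK wt (d - a) (c - d)

/-- the face weight at `λ = 0`: `W(a,b,c,d,z) = W(a,b,c,d,z,0)`. -/
def face0 (wt : ι → (Fin m → ℂ)) (η : ℂ)
    (R : ℂ → (Fin m → ℂ) → Matrix (ι × ι) (ι × ι) ℂ)
    (a b c d : Fin m → ℂ) (z : ℂ) : Matrix (ι × ι) (ι × ι) ℂ :=
  face wt η R a b c d z 0

end Face

section Aux

variable {ι : Type*} [Fintype ι] [DecidableEq ι]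

lemma pairH_single (μ : Fin m → ℂ) (ν₀ : Fin m) : pairH μ (Pi.single ν₀ 1) = μ ν₀ := by
  simp [pairH, Pi.single_apply, mul_ite, Finset.sum_ite_eq']

lemma wz_zero {α β : Type*} [Fintype α] [Fintype β] [DecidableEq α] [DecidableEq β]
    {wtA : α → Fin m → ℂ} {wtB : β → Fin m → ℂ} {F : Matrix (α × β) (α × β) ℂ}
    (h : WeightZero2 wtA wtB F) {p q : α × β}
    (hne : wtA p.1 + wtB p.2 ≠ wtA q.1 + wtB q.2) : F p q = 0 := by
  obtain ⟨ν₀, hν⟩ := Function.ne_iff.mp hne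
  have h2 := congrFun (congrFun (h (Pi.single ν₀ 1)) p) q
  rw [Matrix.diagonal_mul, Matrix.mul_diagonal, pairH_single, pairH_single,
    pairH_single, pairH_single] at h2
  have h3 : ((wtA p.1 + wtB p.2) ν₀ - (wtA q.1 + wtB q.2) ν₀) * F p q = 0 := by
    simp only [Pi.add_apply] at h2 ⊢
    linear_combination h2
  rcases mul_eq_zero.mp h3 with h4 | h4
  · exact absurd (by simpa [sub_eq_zero] using h4) hν
  · exact h4

lemma face0_apply (wt : ι → Fin m → ℂ) (η : ℂ)
    (R : ℂ → (Fin m → ℂ) → Matrix (ι × ι) (ι × ι) ℂ)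
    (a b c d : Fin m → ℂ) (z : ℂ) (x y u v : ι) :
    face0 wt η R a b c d z (x, y) (u, v) =
      ((if wt x = c - b then (1:ℂ) else 0) * (if wt y = b - a then 1 else 0)) *
        R z (η • a + η • c) (x, y) (u, v) *
        ((if wt u = d - a then 1 else 0) * (if wt v = c - d then 1 else 0)) := by
  simp only [face0, face, projK, zero_add, Matrix.mul_diagonal, Matrix.diagonal_mul]


lemma sum3_rot {M : Type*} [AddCommMonoid M] (f : ι → ι → ι → M) :
    ∑ y, ∑ w, ∑ x, f x y w = ∑ x, ∑ y, ∑ w, f x y w :=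
  (Finset.sum_congr rfl fun y _ => Finset.sum_comm).trans Finset.sum_comm

lemma Lp_apply (M N P : Matrix (ι × ι) (ι × ι) ℂ) (p q : ι × ι × ι) :
    (emb12p M * emb13p N * emb23p P : Matrix (ι × ι × ι) (ι × ι × ι) ℂ) p q =
    ∑ x, ∑ y, ∑ w, M (p.1, p.2.1) (x, y) * N (x, p.2.2) (q.1, w) *
      P (y, w) (q.2.1, q.2.2) := by
  simp only [Matrix.mul_apply, emb12p, emb13p, emb23p, Fintype.sum_prod_type,
    mul_ite, mul_one, mul_zero, ite_mul, zero_mul, Finset.sum_ite_eq,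
    Finset.sum_ite_eq', Finset.mem_univ, if_true, Finset.sum_mul, Finset.mul_sum,
    Finset.sum_ite_irrel, Finset.sum_const_zero]
  exact sum3_rot _


lemma Rp_apply (A B C : Matrix (ι × ι) (ι × ι) ℂ) (p q : ι × ι × ι) :
    (emb23p A * emb13p B * emb12p C : Matrix (ι × ι × ι) (ι × ι × ι) ℂ) p q =
    ∑ x, ∑ u, ∑ v, A (p.2.1, p.2.2) (u, v) * B (p.1, v) (x, q.2.2) *
      C (x, u) (q.1, q.2.1) := by
  simp only [Matrix.mul_apply, emb12p, emb13p, emb23p, Fintype.sum_prod_type,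
    mul_ite, mul_one, mul_zero, ite_mul, zero_mul, Finset.sum_ite_eq,
    Finset.sum_ite_eq', Finset.mem_univ, if_true, Finset.sum_mul, Finset.mul_sum,
    Finset.sum_ite_irrel, Finset.sum_const_zero]

lemma Lsh_apply (wt : ι → Fin m → ℂ) (η : ℂ)
    (F G H : (Fin m → ℂ) → Matrix (ι × ι) (ι × ι) ℂ) (lam : Fin m → ℂ)
    (p q : ι × ι × ι) :
    (emb12sh wt η F lam * emb13sh wt (-η) G lam * emb23sh wt η H lam :
        Matrix (ι × ι × ι) (ι × ι × ι) ℂ) p q =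
    ∑ x, ∑ y, ∑ w, F (lam + η • wt p.2.2) (p.1, p.2.1) (x, y) *
      G (lam + (-η) • wt y) (x, p.2.2) (q.1, w) *
      H (lam + η • wt q.1) (y, w) (q.2.1, q.2.2) := by
  simp only [Matrix.mul_apply, emb12sh, emb13sh, emb23sh, Fintype.sum_prod_type,
    mul_ite, mul_one, mul_zero, ite_mul, zero_mul, Finset.sum_ite_eq,
    Finset.sum_ite_eq', Finset.mem_univ, if_true, Finset.sum_mul, Finset.mul_sum,
    Finset.sum_ite_irrel, Finset.sum_const_zero]
  exact sum3_rot _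

lemma Rsh_apply (wt : ι → Fin m → ℂ) (η : ℂ)
    (F G H : (Fin m → ℂ) → Matrix (ι × ι) (ι × ι) ℂ) (lam : Fin m → ℂ)
    (p q : ι × ι × ι) :
    (emb23sh wt (-η) H lam * emb13sh wt η G lam * emb12sh wt (-η) F lam :
        Matrix (ι × ι × ι) (ι × ι × ι) ℂ) p q =
    ∑ x, ∑ u, ∑ v, H (lam + (-η) • wt p.1) (p.2.1, p.2.2) (u, v) *
      G (lam + η • wt u) (p.1, v) (x, q.2.2) *
      F (lam + (-η) • wt q.2.2) (x, u) (q.1, q.2.1) := by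
  simp only [Matrix.mul_apply, emb12sh, emb13sh, emb23sh, Fintype.sum_prod_type,
    mul_ite, mul_one, mul_zero, ite_mul, zero_mul, Finset.sum_ite_eq,
    Finset.sum_ite_eq', Finset.mem_univ, if_true, Finset.sum_mul, Finset.mul_sum,
    Finset.sum_ite_irrel, Finset.sum_const_zero]


lemma sum_swap_g {s : Finset (Fin m → ℂ)} (t : (Fin m → ℂ) → ι → ι → ι → ℂ) :
    ∑ g ∈ s, ∑ x, ∑ y, ∑ w, t g x y w = ∑ x, ∑ y, ∑ w, ∑ g ∈ s, t g x y w :=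
  Finset.sum_comm.trans (Finset.sum_congr rfl fun x _ =>
    Finset.sum_comm.trans (Finset.sum_congr rfl fun y _ => Finset.sum_comm))

end Aux

/-- the face weights of a generalized quantum R-matrix satisfy
the star-triangle relation
`Σ_g W(b,c,d,g,z₁₂)^{(12)} W(a,b,g,f,z₁₃)^{(13)} W(f,g,d,e,z₂₃)^{(23)} =
 Σ_g W(a,b,c,g,z₂₃)^{(23)} W(g,c,d,e,z₁₃)^{(13)} W(a,g,e,f,z₁₂)^{(12)}`
on `V[f−a] ⊗ V[e−f] ⊗ V[d−e]` (the sums range over all `g` for which the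
occurring weight differences are weights of `V`; all other terms vanish). -/
theorem star_triangle_of_MYBE
    {ι : Type*} [Fintype ι] [DecidableEq ι]
    (wt : ι → (Fin m → ℂ)) (η : ℂ)
    (R : ℂ → (Fin m → ℂ) → Matrix (ι × ι) (ι × ι) ℂ) (hR : IsGenR wt η R)
    (a b c d e f : Fin m → ℂ) (z₁ z₂ z₃ : ℂ) :
    (∑ g ∈ (Finset.univ.image fun i => b + wt i) ∪
        (Finset.univ.image fun i => a + wt i),
        emb12p (face0 wt η R b c d g (z₁ - z₂)) *
          emb13p (face0 wt η R a b g f (z₁ - z₃)) *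
          emb23p (face0 wt η R f g d e (z₂ - z₃))) *
      Matrix.diagonal (fun p : ι × ι × ι =>
        ((if wt p.1 = f - a then 1 else 0) *
          (if wt p.2.1 = e - f then 1 else 0) *
          (if wt p.2.2 = d - e then 1 else 0) : ℂ)) =
    (∑ g ∈ (Finset.univ.image fun i => b + wt i) ∪
        (Finset.univ.image fun i => a + wt i),
        emb23p (face0 wt η R a b c g (z₂ - z₃)) *
          emb13p (face0 wt η R g c d e (z₁ - z₃)) *
          emb12p (face0 wt η R a g e f (z₁ - z₂))) *
      Matrix.diagonal (fun p : ι × ι × ι =>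
        ((if wt p.1 = f - a then 1 else 0) *
          (if wt p.2.1 = e - f then 1 else 0) *
          (if wt p.2.2 = d - e then 1 else 0) : ℂ)) := by
  obtain ⟨hY, -, hW⟩ := hR
  have hwz : ∀ z lam (p q : ι × ι), wt p.1 + wt p.2 ≠ wt q.1 + wt q.2 →
      R z lam p q = 0 := fun z lam p q h => wz_zero (hW z lam) h
  ext p q
  obtain ⟨i, j, k⟩ := p
  obtain ⟨i', j', k'⟩ := q
  rw [Matrix.mul_diagonal, Matrix.mul_diagonal, Matrix.sum_apply, Matrix.sum_apply]
  by_cases h1 : wt i' = f - a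
  swap
  · simp [h1]
  by_cases h2 : wt j' = e - f
  swap
  · simp [h2]
  by_cases h3 : wt k' = d - e
  swap
  · simp [h3]
  simp only [h1, h2, h3, if_pos rfl, mul_one, one_mul]
  simp only [Lp_apply, Rp_apply, face0_apply]
  by_cases hp1 : wt i = d - c
  swap
  · simp [hp1]
  by_cases hp2 : wt j = c - b
  swap
  · simp [hp2]
  by_cases hp3 : wt k = b - a
  swap
  · simp [hp3]
  simp only [hp1, hp2, hp3, h1, h2, h3, if_pos rfl, if_true, mul_one, one_mul]
  have e1 : η • a + η • d + η • (b - a) = η • b + η • d := by module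
  have e2 : η • a + η • d + (-η) • (d - c) = η • a + η • c := by module
  have e3 : η • a + η • d + η • (f - a) = η • f + η • d := by module
  have e4 : η • a + η • d + (-η) • (d - e) = η • a + η • e := by module
  have key := congrFun (congrFun (hY z₁ z₂ z₃ (η • a + η • d)) (i, j, k)) (i', j', k')
  rw [Lsh_apply, Rsh_apply] at key
  dsimp only at key
  rw [hp1, hp3, h1, h3, e1, e2, e3, e4] at key
  refine Eq.trans ?_ (key.trans ?_)
  · rw [sum_swap_g]
    refine Finset.sum_congr rfl fun x _ => Finset.sum_congr rfl fun y _ =>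
      Finset.sum_congr rfl fun w _ => ?_
    have hmem : b + wt x ∈ (Finset.univ.image fun i => b + wt i) ∪
        (Finset.univ.image fun i => a + wt i) :=
      Finset.mem_union_left _ (Finset.mem_image_of_mem _ (Finset.mem_univ x))
    refine (Finset.sum_eq_single_of_mem (b + wt x) hmem fun g _ hne => ?_).trans ?_
    · have hx : ¬ wt x = g - b := fun h => hne (by rw [h]; module)
      simp [hx]
    · by_cases hxy : wt y = d - (b + wt x)
      · by_cases hw : wt w = b + wt x - f
        · have harg : η • a + η • d + (-η) • wt y = η • a + η • (b + wt x) := by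
            rw [hxy]; module
          rw [harg]
          simp [hxy, hw]
          try ring
        · have hz : R (z₁ - z₃) (η • a + η • d + (-η) • wt y) (x, k) (i', w) = 0 := by
            refine hwz _ _ _ _ ?_
            dsimp only
            rw [hp3, h1]
            intro hcon
            exact hw (by linear_combination -hcon)
          rw [neg_smul] at hz
          simp [hw, hz]
      · have hz : R (z₁ - z₂) (η • b + η • d) (i, j) (x, y) = 0 := by
          refine hwz _ _ _ _ ?_
          dsimp only
          rw [hp1, hp2]
          intro hcon
          exact hxy (by linear_combination -hcon)
        simp [hxy, hz]
  · refine Eq.symm ?_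
    rw [sum_swap_g]
    refine Finset.sum_congr rfl fun x _ => Finset.sum_congr rfl fun u _ =>
      Finset.sum_congr rfl fun v _ => ?_
    have hmem : a + wt u ∈ (Finset.univ.image fun i => b + wt i) ∪
        (Finset.univ.image fun i => a + wt i) :=
      Finset.mem_union_right _ (Finset.mem_image_of_mem _ (Finset.mem_univ u))
    refine (Finset.sum_eq_single_of_mem (a + wt u) hmem fun g _ hne => ?_).trans ?_
    · have hu : ¬ wt u = g - a := fun h => hne (by rw [h]; module)
      simp [hu]
    · by_cases hv : wt v = c - (a + wt u)
      · by_cases hx2 : wt x = e - (a + wt u)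
        · have harg : η • (a + wt u) + η • d = η • a + η • d + η • wt u := by module
          rw [harg]
          simp [hv, hx2]
          try ring
        · have hz : R (z₁ - z₂) (η • a + η • e) (x, u) (i', j') = 0 := by
            refine hwz _ _ _ _ ?_
            dsimp only
            rw [h1, h2]
            intro hcon
            exact hx2 (by linear_combination hcon)
          simp [hx2, hz]
      · have hz : R (z₂ - z₃) (η • a + η • c) (j, k) (u, v) = 0 := by
          refine hwz _ _ _ _ ?_
          dsimp only
          rw [hp2, hp3]
          intro hcon
          exact hv (by linear_combination -hcon)
        simp [hv, hz]
end
end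

section
/- The monodromy matrix L(z,λ) = Π_{j=2}^{n+1} R^{(1j)}(z−z_j, λ − η Σ_{1<i<j} h^{(i)} + η Σ_{j<i≤n+1} h^{(i)}) (factors ordered left to right) defines a representation of A(R) on V^{⊗n}: it is of weight zero and satisfies the RLL relation with R. -/
open Matrix Filter Topology
open scoped BigOperators

noncomputable section

/- The Cartan subalgebra `𝔥` is identified with `ℂ^m = Fin m → ℂ` via an
orthonormal basis `(h_ν)`; a diagonalizable `𝔥`-module is a space `ℂ^ι`
together with a weight function `wt : ι → (Fin m → ℂ)`; `λ ∈ 𝔥` acts on the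
basis vector `i` by the scalar `⟨wt i, λ⟩ = Σ_ν (wt i) ν * λ ν`. -/

variable {m : ℕ}

set_option linter.unusedSectionVars false
section WZ

variable {m : ℕ} {α β : Type*} [Fintype α] [Fintype β] [DecidableEq α] [DecidableEq β]

lemma pairH_eval (μ : Fin m → ℂ) (ν : Fin m) : pairH μ (Pi.single ν 1) = μ ν := by
  simp [pairH, Pi.single_apply, mul_ite]

lemma pairH_add (μ ν X : Fin m → ℂ) : pairH (μ + ν) X = pairH μ X + pairH ν X := by
  simp [pairH, add_mul, Finset.sum_add_distrib]

lemma wz_support {wtA : α → Fin m → ℂ} {wtB : β → Fin m → ℂ}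
    {F : Matrix (α × β) (α × β) ℂ} (h : WeightZero2 wtA wtB F)
    {p q : α × β} (hne : F p q ≠ 0) :
    wtA p.1 + wtB p.2 = wtA q.1 + wtB q.2 := by
  funext ν
  have h2 : (Matrix.diagonal (fun r : α × β =>
        pairH (wtA r.1) (Pi.single ν 1) + pairH (wtB r.2) (Pi.single ν 1)) * F) p q
      = (F * Matrix.diagonal (fun r : α × β =>
        pairH (wtA r.1) (Pi.single ν 1) + pairH (wtB r.2) (Pi.single ν 1))) p q := by
    rw [h (Pi.single ν 1)]
  rw [Matrix.diagonal_mul, Matrix.mul_diagonal, mul_comm (F p q)] at h2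
  have h3 := mul_right_cancel₀ hne h2
  simpa [pairH_eval] using h3

lemma wz_of_support {wtA : α → Fin m → ℂ} {wtB : β → Fin m → ℂ}
    {F : Matrix (α × β) (α × β) ℂ}
    (h : ∀ p q, F p q ≠ 0 → wtA p.1 + wtB p.2 = wtA q.1 + wtB q.2) :
    WeightZero2 wtA wtB F := by
  intro X
  ext p q
  rw [Matrix.diagonal_mul, Matrix.mul_diagonal]
  by_cases hF : F p q = 0
  · simp [hF]
  · have h4 : pairH (wtA p.1 + wtB p.2) X = pairH (wtA q.1 + wtB q.2) X := by
      rw [h p q hF]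
    rw [pairH_add, pairH_add] at h4
    rw [h4, mul_comm]

end WZ
section Tensor

variable {m : ℕ} {ι α β : Type*} [Fintype ι] [DecidableEq ι] [Fintype α] [DecidableEq α]
  [Fintype β] [DecidableEq β]

/-- the tensor product L-operator on `W₁ ⊗ W₂`. -/
def tensorL (wtA : α → Fin m → ℂ) (wtB : β → Fin m → ℂ) (η : ℂ)
    (LA : ℂ → (Fin m → ℂ) → Matrix (ι × α) (ι × α) ℂ)
    (LB : ℂ → (Fin m → ℂ) → Matrix (ι × β) (ι × β) ℂ) :
    ℂ → (Fin m → ℂ) → Matrix (ι × α × β) (ι × α × β) ℂ :=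
  fun z lam => emb12sh wtB η (LA z) lam * emb13sh wtA (-η) (LB z) lam

variable (wt : ι → Fin m → ℂ) (wtA : α → Fin m → ℂ) (wtB : β → Fin m → ℂ)

/-- `F^{(12)}` on the four-fold space. -/
def m12T (c₃ c₄ : ℂ) (F : (Fin m → ℂ) → Matrix (ι × ι) (ι × ι) ℂ) (lam : Fin m → ℂ) :
    Matrix (ι × ι × α × β) (ι × ι × α × β) ℂ :=
  fun p q => F (lam + c₃ • wtA p.2.2.1 + c₄ • wtB p.2.2.2) (p.1, p.2.1) (q.1, q.2.1) *
    (if p.2.2.1 = q.2.2.1 then 1 else 0) * (if p.2.2.2 = q.2.2.2 then 1 else 0)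

/-- `F^{(13)}` on the four-fold space. -/
def m13T (c₂ c₄ : ℂ) (F : (Fin m → ℂ) → Matrix (ι × α) (ι × α) ℂ) (lam : Fin m → ℂ) :
    Matrix (ι × ι × α × β) (ι × ι × α × β) ℂ :=
  fun p q => F (lam + c₂ • wt p.2.1 + c₄ • wtB p.2.2.2) (p.1, p.2.2.1) (q.1, q.2.2.1) *
    (if p.2.1 = q.2.1 then 1 else 0) * (if p.2.2.2 = q.2.2.2 then 1 else 0)

/-- `F^{(14)}` on the four-fold space. -/
def m14T (c₂ c₃ : ℂ) (F : (Fin m → ℂ) → Matrix (ι × β) (ι × β) ℂ) (lam : Fin m → ℂ) :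
    Matrix (ι × ι × α × β) (ι × ι × α × β) ℂ :=
  fun p q => F (lam + c₂ • wt p.2.1 + c₃ • wtA p.2.2.1) (p.1, p.2.2.2) (q.1, q.2.2.2) *
    (if p.2.1 = q.2.1 then 1 else 0) * (if p.2.2.1 = q.2.2.1 then 1 else 0)

/-- `F^{(23)}` on the four-fold space. -/
def m23T (c₁ c₄ : ℂ) (F : (Fin m → ℂ) → Matrix (ι × α) (ι × α) ℂ) (lam : Fin m → ℂ) :
    Matrix (ι × ι × α × β) (ι × ι × α × β) ℂ :=
  fun p q => F (lam + c₁ • wt p.1 + c₄ • wtB p.2.2.2) (p.2.1, p.2.2.1) (q.2.1, q.2.2.1) *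
    (if p.1 = q.1 then 1 else 0) * (if p.2.2.2 = q.2.2.2 then 1 else 0)

/-- `F^{(24)}` on the four-fold space. -/
def m24T (c₁ c₃ : ℂ) (F : (Fin m → ℂ) → Matrix (ι × β) (ι × β) ℂ) (lam : Fin m → ℂ) :
    Matrix (ι × ι × α × β) (ι × ι × α × β) ℂ :=
  fun p q => F (lam + c₁ • wt p.1 + c₃ • wtA p.2.2.1) (p.2.1, p.2.2.2) (q.2.1, q.2.2.2) *
    (if p.1 = q.1 then 1 else 0) * (if p.2.2.1 = q.2.2.1 then 1 else 0)

/-- lift of a family on `V ⊗ V ⊗ W₁` to the four-fold space (diagonal in `W₂`,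
with dynamical shift `c₄ h^{(4)}`). -/
def liftB (c₄ : ℂ) (M : (Fin m → ℂ) → Matrix (ι × ι × α) (ι × ι × α) ℂ)
    (lam : Fin m → ℂ) : Matrix (ι × ι × α × β) (ι × ι × α × β) ℂ :=
  fun p q => M (lam + c₄ • wtB p.2.2.2) (p.1, p.2.1, p.2.2.1) (q.1, q.2.1, q.2.2.1) *
    (if p.2.2.2 = q.2.2.2 then 1 else 0)

/-- lift of a family on `V ⊗ V ⊗ W₂` to the four-fold space (diagonal in `W₁`,
with dynamical shift `c₃ h^{(3)}`). -/
def liftA (c₃ : ℂ) (M : (Fin m → ℂ) → Matrix (ι × ι × β) (ι × ι × β) ℂ)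
    (lam : Fin m → ℂ) : Matrix (ι × ι × α × β) (ι × ι × α × β) ℂ :=
  fun p q => M (lam + c₃ • wtA p.2.2.1) (p.1, p.2.1, p.2.2.2) (q.1, q.2.1, q.2.2.2) *
    (if p.2.2.1 = q.2.2.1 then 1 else 0)

lemma liftB_mul (c : ℂ) (M N : (Fin m → ℂ) → Matrix (ι × ι × α) (ι × ι × α) ℂ)
    (lam : Fin m → ℂ) :
    liftB wtB c (fun μ => M μ * N μ) lam = liftB wtB c M lam * liftB wtB c N lam := by
  funext p q
  simp only [liftB, Matrix.mul_apply, Fintype.sum_prod_type, mul_ite, ite_mul,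
    mul_zero, zero_mul, mul_one, one_mul, Finset.sum_ite_eq, Finset.sum_ite_eq',
    Finset.mem_univ, if_true, Finset.sum_ite_irrel, Finset.sum_const_zero]
  split_ifs with h
  · rw [h]
  · rfl

lemma liftA_mul (c : ℂ) (M N : (Fin m → ℂ) → Matrix (ι × ι × β) (ι × ι × β) ℂ)
    (lam : Fin m → ℂ) :
    liftA wtA c (fun μ => M μ * N μ) lam = liftA wtA c M lam * liftA wtA c N lam := by
  funext p q
  simp only [liftA, Matrix.mul_apply, Fintype.sum_prod_type, mul_ite, ite_mul,
    mul_zero, zero_mul, mul_one, one_mul, Finset.sum_ite_eq, Finset.sum_ite_eq',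
    Finset.mem_univ, if_true, Finset.sum_ite_irrel, Finset.sum_const_zero]
  split_ifs with h
  · rw [h]
  · rfl

end Tensor
section Tensor2

variable {m : ℕ} {ι α β : Type*} [Fintype ι] [DecidableEq ι] [Fintype α] [DecidableEq α]
  [Fintype β] [DecidableEq β]
variable (wt : ι → Fin m → ℂ) (wtA : α → Fin m → ℂ) (wtB : β → Fin m → ℂ)

lemma liftB_emb12 (c₃ c₄ : ℂ) (F : (Fin m → ℂ) → Matrix (ι × ι) (ι × ι) ℂ)
    (lam : Fin m → ℂ) :
    liftB (ι := ι) (α := α) wtB c₄ (fun μ => emb12sh wtA c₃ F μ) lam =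
      m12T wtA wtB c₃ c₄ F lam := by
  funext p q
  simp only [liftB, emb12sh, m12T]
  rw [add_right_comm]

lemma liftB_emb13 (c₂ c₄ : ℂ) (F : (Fin m → ℂ) → Matrix (ι × α) (ι × α) ℂ)
    (lam : Fin m → ℂ) :
    liftB (ι := ι) wtB c₄ (fun μ => emb13sh wt c₂ F μ) lam =
      m13T wt wtB c₂ c₄ F lam := by
  funext p q
  simp only [liftB, emb13sh, m13T]
  rw [add_right_comm]

lemma liftB_emb23 (c₁ c₄ : ℂ) (F : (Fin m → ℂ) → Matrix (ι × α) (ι × α) ℂ)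
    (lam : Fin m → ℂ) :
    liftB (ι := ι) wtB c₄ (fun μ => emb23sh wt c₁ F μ) lam =
      m23T wt wtB c₁ c₄ F lam := by
  funext p q
  simp only [liftB, emb23sh, m23T]
  rw [add_right_comm]

lemma liftA_emb12 (c₃ c₄ : ℂ) (F : (Fin m → ℂ) → Matrix (ι × ι) (ι × ι) ℂ)
    (lam : Fin m → ℂ) :
    liftA (ι := ι) (β := β) wtA c₃ (fun μ => emb12sh wtB c₄ F μ) lam =
      m12T wtA wtB c₃ c₄ F lam := by
  funext p q
  simp only [liftA, emb12sh, m12T]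
  ring

lemma liftA_emb13 (c₂ c₃ : ℂ) (F : (Fin m → ℂ) → Matrix (ι × β) (ι × β) ℂ)
    (lam : Fin m → ℂ) :
    liftA (ι := ι) (α := α) wtA c₃ (fun μ => emb13sh wt c₂ F μ) lam =
      m14T wt wtA c₂ c₃ F lam := by
  funext p q
  simp only [liftA, emb13sh, m14T]
  rw [add_right_comm]

lemma liftA_emb23 (c₁ c₃ : ℂ) (F : (Fin m → ℂ) → Matrix (ι × β) (ι × β) ℂ)
    (lam : Fin m → ℂ) :
    liftA (ι := ι) (α := α) wtA c₃ (fun μ => emb23sh wt c₁ F μ) lam =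
      m24T wt wtA c₁ c₃ F lam := by
  funext p q
  simp only [liftA, emb23sh, m24T]
  rw [add_right_comm]

end Tensor2
section Tensor3

variable {m : ℕ} {ι α β : Type*} [Fintype ι] [DecidableEq ι] [Fintype α] [DecidableEq α]
  [Fintype β] [DecidableEq β]
variable (wt : ι → Fin m → ℂ) (wtA : α → Fin m → ℂ) (wtB : β → Fin m → ℂ)

lemma emb12_eq_m12T (c : ℂ) (F : (Fin m → ℂ) → Matrix (ι × ι) (ι × ι) ℂ)
    (lam : Fin m → ℂ) :
    emb12sh (fun p : α × β => wtA p.1 + wtB p.2) c F lam = m12T wtA wtB c c F lam := by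
  funext p q
  simp only [emb12sh, m12T, smul_add, Prod.ext_iff, ite_and, add_assoc]
  by_cases h1 : p.2.2.1 = q.2.2.1 <;> by_cases h2 : p.2.2.2 = q.2.2.2 <;> simp [h1, h2]

lemma decomp13 (c η : ℂ) (LA : (Fin m → ℂ) → Matrix (ι × α) (ι × α) ℂ)
    (LB : (Fin m → ℂ) → Matrix (ι × β) (ι × β) ℂ) (lam : Fin m → ℂ) :
    emb13sh wt c (fun μ => emb12sh wtB η LA μ * emb13sh wtA (-η) LB μ) lam =
      m13T wt wtB c η LA lam * m14T wt wtA c (-η) LB lam := by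
  funext p q
  simp only [emb13sh, emb12sh, m13T, m14T, Matrix.mul_apply, Fintype.sum_prod_type,
    mul_ite, ite_mul, mul_zero, zero_mul, mul_one, one_mul, Finset.sum_ite_eq,
    Finset.sum_ite_eq', Finset.mem_univ, if_true, Finset.sum_ite_irrel,
    Finset.sum_const_zero, neg_smul, sub_eq_add_neg, add_assoc, Finset.sum_mul,
    Finset.mul_sum]
  split_ifs with h
  · rw [h]
  · rfl

lemma decomp23 (c η : ℂ) (LA : (Fin m → ℂ) → Matrix (ι × α) (ι × α) ℂ)
    (LB : (Fin m → ℂ) → Matrix (ι × β) (ι × β) ℂ) (lam : Fin m → ℂ) :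
    emb23sh wt c (fun μ => emb12sh wtB η LA μ * emb13sh wtA (-η) LB μ) lam =
      m23T wt wtB c η LA lam * m24T wt wtA c (-η) LB lam := by
  funext p q
  simp only [emb23sh, emb12sh, emb13sh, m23T, m24T, Matrix.mul_apply, Fintype.sum_prod_type,
    mul_ite, ite_mul, mul_zero, zero_mul, mul_one, one_mul, Finset.sum_ite_eq,
    Finset.sum_ite_eq', Finset.mem_univ, if_true, Finset.sum_ite_irrel,
    Finset.sum_const_zero, neg_smul, sub_eq_add_neg, add_assoc, Finset.sum_mul,
    Finset.mul_sum]
  split_ifs with h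
  · rw [h]
  · rfl

end Tensor3
section Tensor4

variable {m : ℕ} {ι α β : Type*} [Fintype ι] [DecidableEq ι] [Fintype α] [DecidableEq α]
  [Fintype β] [DecidableEq β]
variable (wt : ι → Fin m → ℂ) (wtA : α → Fin m → ℂ) (wtB : β → Fin m → ℂ)

lemma comm_14_23 (c d : ℂ) (F : (Fin m → ℂ) → Matrix (ι × β) (ι × β) ℂ)
    (G : (Fin m → ℂ) → Matrix (ι × α) (ι × α) ℂ)
    (hF : ∀ μ, WeightZero2 wt wtB (F μ)) (hG : ∀ μ, WeightZero2 wt wtA (G μ))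
    (lam : Fin m → ℂ) :
    m14T wt wtA c c F lam * m23T wt wtB d d G lam =
      m23T wt wtB d d G lam * m14T wt wtA c c F lam := by
  funext p q
  simp only [m14T, m23T, Matrix.mul_apply, Fintype.sum_prod_type,
    mul_ite, ite_mul, mul_zero, zero_mul, mul_one, one_mul, Finset.sum_ite_eq,
    Finset.sum_ite_eq', Finset.mem_univ, if_true, Finset.sum_ite_irrel,
    Finset.sum_const_zero]
  by_cases h1 : wt p.2.1 + wtA p.2.2.1 = wt q.2.1 + wtA q.2.2.1
  · by_cases h2 : wt p.1 + wtB p.2.2.2 = wt q.1 + wtB q.2.2.2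
    · have e1 : lam + c • wt p.2.1 + c • wtA p.2.2.1
          = lam + c • wt q.2.1 + c • wtA q.2.2.1 := by
        rw [add_assoc, add_assoc, ← smul_add, ← smul_add, h1]
      have e2 : lam + d • wt p.1 + d • wtB p.2.2.2
          = lam + d • wt q.1 + d • wtB q.2.2.2 := by
        rw [add_assoc, add_assoc, ← smul_add, ← smul_add, h2]
      rw [e1, e2]
      ring
    · have z1 : ∀ μ, F μ (p.1, p.2.2.2) (q.1, q.2.2.2) = 0 := by
        intro μ; by_contra hc
        exact h2 (wz_support (hF μ) hc)
      rw [z1, z1]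
      ring
  · have z2 : ∀ μ, G μ (p.2.1, p.2.2.1) (q.2.1, q.2.2.1) = 0 := by
      intro μ; by_contra hc
      exact h1 (wz_support (hG μ) hc)
    rw [z2, z2]
    ring

lemma comm_13_24 (c d : ℂ) (F : (Fin m → ℂ) → Matrix (ι × α) (ι × α) ℂ)
    (G : (Fin m → ℂ) → Matrix (ι × β) (ι × β) ℂ)
    (hF : ∀ μ, WeightZero2 wt wtA (F μ)) (hG : ∀ μ, WeightZero2 wt wtB (G μ))
    (lam : Fin m → ℂ) :
    m13T wt wtB c c F lam * m24T wt wtA d d G lam =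
      m24T wt wtA d d G lam * m13T wt wtB c c F lam := by
  funext p q
  simp only [m13T, m24T, Matrix.mul_apply, Fintype.sum_prod_type,
    mul_ite, ite_mul, mul_zero, zero_mul, mul_one, one_mul, Finset.sum_ite_eq,
    Finset.sum_ite_eq', Finset.mem_univ, if_true, Finset.sum_ite_irrel,
    Finset.sum_const_zero]
  by_cases h1 : wt p.2.1 + wtB p.2.2.2 = wt q.2.1 + wtB q.2.2.2
  · by_cases h2 : wt p.1 + wtA p.2.2.1 = wt q.1 + wtA q.2.2.1
    · have e1 : lam + c • wt p.2.1 + c • wtB p.2.2.2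
          = lam + c • wt q.2.1 + c • wtB q.2.2.2 := by
        rw [add_assoc, add_assoc, ← smul_add, ← smul_add, h1]
      have e2 : lam + d • wt p.1 + d • wtA p.2.2.1
          = lam + d • wt q.1 + d • wtA q.2.2.1 := by
        rw [add_assoc, add_assoc, ← smul_add, ← smul_add, h2]
      rw [e1, e2]
      ring
    · have z1 : ∀ μ, F μ (p.1, p.2.2.1) (q.1, q.2.2.1) = 0 := by
        intro μ; by_contra hc
        exact h2 (wz_support (hF μ) hc)
      rw [z1, z1]
      ring
  · have z2 : ∀ μ, G μ (p.2.1, p.2.2.2) (q.2.1, q.2.2.2) = 0 := by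
      intro μ; by_contra hc
      exact h1 (wz_support (hG μ) hc)
    rw [z2, z2]
    ring

end Tensor4
section Tensor5

variable {m : ℕ} {ι α β : Type*} [Fintype ι] [DecidableEq ι] [Fintype α] [DecidableEq α]
  [Fintype β] [DecidableEq β]
variable (wt : ι → Fin m → ℂ) (wtA : α → Fin m → ℂ) (wtB : β → Fin m → ℂ)

lemma stepA (η : ℂ) (R : ℂ → (Fin m → ℂ) → Matrix (ι × ι) (ι × ι) ℂ)
    (LA : ℂ → (Fin m → ℂ) → Matrix (ι × α) (ι × α) ℂ)
    (hL : RLL wt wtA η R LA) (z₁ z₂ : ℂ) (lam : Fin m → ℂ) :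
    m12T (β := β) wtA wtB η η (R (z₁ - z₂)) lam * m13T wt wtB (-η) η (LA z₁) lam *
        m23T wt wtB η η (LA z₂) lam =
      m23T wt wtB (-η) η (LA z₂) lam * m13T wt wtB η η (LA z₁) lam *
        m12T wtA wtB (-η) η (R (z₁ - z₂)) lam := by
  rw [← liftB_emb12 wtA wtB, ← liftB_emb13 wt wtB, ← liftB_emb13 wt wtB,
    ← liftB_emb23 wt wtB, ← liftB_emb23 wt wtB, ← liftB_emb12 wtA wtB,
    ← liftB_mul, ← liftB_mul, ← liftB_mul, ← liftB_mul]
  have h : (fun μ => emb12sh wtA η (R (z₁ - z₂)) μ * emb13sh wt (-η) (LA z₁) μ *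
      emb23sh wt η (LA z₂) μ) = (fun μ => emb23sh wt (-η) (LA z₂) μ *
      emb13sh wt η (LA z₁) μ * emb12sh wtA (-η) (R (z₁ - z₂)) μ) :=
    funext fun μ => hL z₁ z₂ μ
  rw [h]

lemma stepB (η : ℂ) (R : ℂ → (Fin m → ℂ) → Matrix (ι × ι) (ι × ι) ℂ)
    (LB : ℂ → (Fin m → ℂ) → Matrix (ι × β) (ι × β) ℂ)
    (hL : RLL wt wtB η R LB) (z₁ z₂ : ℂ) (lam : Fin m → ℂ) :
    m12T (α := α) wtA wtB (-η) η (R (z₁ - z₂)) lam * m14T wt wtA (-η) (-η) (LB z₁) lam *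
        m24T wt wtA η (-η) (LB z₂) lam =
      m24T wt wtA (-η) (-η) (LB z₂) lam * m14T wt wtA η (-η) (LB z₁) lam *
        m12T wtA wtB (-η) (-η) (R (z₁ - z₂)) lam := by
  rw [← liftA_emb12 wtA wtB, ← liftA_emb13 wt wtA, ← liftA_emb13 wt wtA,
    ← liftA_emb23 wt wtA, ← liftA_emb23 wt wtA, ← liftA_emb12 wtA wtB,
    ← liftA_mul, ← liftA_mul, ← liftA_mul, ← liftA_mul]
  have h : (fun μ => emb12sh wtB η (R (z₁ - z₂)) μ * emb13sh wt (-η) (LB z₁) μ *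
      emb23sh wt η (LB z₂) μ) = (fun μ => emb23sh wt (-η) (LB z₂) μ *
      emb13sh wt η (LB z₁) μ * emb12sh wtB (-η) (R (z₁ - z₂)) μ) :=
    funext fun μ => hL z₁ z₂ μ
  rw [h]

theorem tensor_isRep (η : ℂ) (R : ℂ → (Fin m → ℂ) → Matrix (ι × ι) (ι × ι) ℂ)
    (LA : ℂ → (Fin m → ℂ) → Matrix (ι × α) (ι × α) ℂ)
    (LB : ℂ → (Fin m → ℂ) → Matrix (ι × β) (ι × β) ℂ)
    (hA : IsRep wt wtA η R LA) (hB : IsRep wt wtB η R LB) :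
    IsRep wt (fun p : α × β => wtA p.1 + wtB p.2) η R (tensorL wtA wtB η LA LB) := by
  constructor
  · intro z₁ z₂ lam
    have hd13 : ∀ (c : ℂ) (z : ℂ),
        emb13sh wt c (tensorL wtA wtB η LA LB z) lam =
          m13T wt wtB c η (LA z) lam * m14T wt wtA c (-η) (LB z) lam := fun c z =>
      decomp13 wt wtA wtB c η (LA z) (LB z) lam
    have hd23 : ∀ (c : ℂ) (z : ℂ),
        emb23sh wt c (tensorL wtA wtB η LA LB z) lam =
          m23T wt wtB c η (LA z) lam * m24T wt wtA c (-η) (LB z) lam := fun c z =>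
      decomp23 wt wtA wtB c η (LA z) (LB z) lam
    rw [hd13, hd23, hd13, hd23, emb12_eq_m12T, emb12_eq_m12T]
    calc m12T wtA wtB η η (R (z₁ - z₂)) lam *
          (m13T wt wtB (-η) η (LA z₁) lam * m14T wt wtA (-η) (-η) (LB z₁) lam) *
          (m23T wt wtB η η (LA z₂) lam * m24T wt wtA η (-η) (LB z₂) lam)
        = m12T wtA wtB η η (R (z₁ - z₂)) lam * m13T wt wtB (-η) η (LA z₁) lam *
          (m14T wt wtA (-η) (-η) (LB z₁) lam * m23T wt wtB η η (LA z₂) lam) *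
          m24T wt wtA η (-η) (LB z₂) lam := by simp only [mul_assoc]
      _ = m12T wtA wtB η η (R (z₁ - z₂)) lam * m13T wt wtB (-η) η (LA z₁) lam *
          (m23T wt wtB η η (LA z₂) lam * m14T wt wtA (-η) (-η) (LB z₁) lam) *
          m24T wt wtA η (-η) (LB z₂) lam := by
            rw [comm_14_23 wt wtA wtB (-η) η (LB z₁) (LA z₂)
              (fun μ => hB.2 z₁ μ) (fun μ => hA.2 z₂ μ) lam]
      _ = (m12T wtA wtB η η (R (z₁ - z₂)) lam * m13T wt wtB (-η) η (LA z₁) lam *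
          m23T wt wtB η η (LA z₂) lam) *
          (m14T wt wtA (-η) (-η) (LB z₁) lam * m24T wt wtA η (-η) (LB z₂) lam) := by
            simp only [mul_assoc]
      _ = (m23T wt wtB (-η) η (LA z₂) lam * m13T wt wtB η η (LA z₁) lam *
          m12T wtA wtB (-η) η (R (z₁ - z₂)) lam) *
          (m14T wt wtA (-η) (-η) (LB z₁) lam * m24T wt wtA η (-η) (LB z₂) lam) := by
            rw [stepA wt wtA wtB η R LA hA.1 z₁ z₂ lam]
      _ = m23T wt wtB (-η) η (LA z₂) lam * m13T wt wtB η η (LA z₁) lam *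
          (m12T wtA wtB (-η) η (R (z₁ - z₂)) lam * m14T wt wtA (-η) (-η) (LB z₁) lam *
          m24T wt wtA η (-η) (LB z₂) lam) := by simp only [mul_assoc]
      _ = m23T wt wtB (-η) η (LA z₂) lam * m13T wt wtB η η (LA z₁) lam *
          (m24T wt wtA (-η) (-η) (LB z₂) lam * m14T wt wtA η (-η) (LB z₁) lam *
          m12T wtA wtB (-η) (-η) (R (z₁ - z₂)) lam) := by
            rw [stepB wt wtA wtB η R LB hB.1 z₁ z₂ lam]
      _ = m23T wt wtB (-η) η (LA z₂) lam *
          (m13T wt wtB η η (LA z₁) lam * m24T wt wtA (-η) (-η) (LB z₂) lam) *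
          (m14T wt wtA η (-η) (LB z₁) lam * m12T wtA wtB (-η) (-η) (R (z₁ - z₂)) lam) := by
            simp only [mul_assoc]
      _ = m23T wt wtB (-η) η (LA z₂) lam *
          (m24T wt wtA (-η) (-η) (LB z₂) lam * m13T wt wtB η η (LA z₁) lam) *
          (m14T wt wtA η (-η) (LB z₁) lam * m12T wtA wtB (-η) (-η) (R (z₁ - z₂)) lam) := by
            rw [comm_13_24 wt wtA wtB η (-η) (LA z₁) (LB z₂)
              (fun μ => hA.2 z₁ μ) (fun μ => hB.2 z₂ μ) lam]
      _ = (m23T wt wtB (-η) η (LA z₂) lam * m24T wt wtA (-η) (-η) (LB z₂) lam) *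
          (m13T wt wtB η η (LA z₁) lam * m14T wt wtA η (-η) (LB z₁) lam) *
          m12T wtA wtB (-η) (-η) (R (z₁ - z₂)) lam := by simp only [mul_assoc]
  · intro z lam
    apply wz_of_support
    intro p q hne
    obtain ⟨r, hr⟩ : ∃ r, emb12sh wtB η (LA z) lam p r *
        emb13sh wtA (-η) (LB z) lam r q ≠ 0 := by
      by_contra hcon
      push_neg at hcon
      apply hne
      rw [tensorL, Matrix.mul_apply]
      exact Finset.sum_eq_zero fun r _ => hcon r
    simp only [emb12sh, emb13sh] at hr
    have h3 : p.2.2 = r.2.2 := by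
      by_contra hc; simp [hc] at hr
    have h4 : r.2.1 = q.2.1 := by
      by_contra hc; simp [hc] at hr
    have hLA : LA z (lam + η • wtB p.2.2) (p.1, p.2.1) (r.1, r.2.1) ≠ 0 := by
      intro hc; simp [hc] at hr
    have hLB : LB z (lam + -(η • wtA r.2.1)) (r.1, r.2.2) (q.1, q.2.2) ≠ 0 := by
      intro hc; simp [hc] at hr
    have w1 := wz_support (hA.2 z _) hLA
    have w2 := wz_support (hB.2 z _) hLB
    simp only at w1 w2
    have : wt p.1 + wtA p.2.1 + wtB p.2.2 = wt q.1 + wtA q.2.1 + wtB q.2.2 := by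
      rw [h3]
      calc wt p.1 + wtA p.2.1 + wtB r.2.2 = wt r.1 + wtA r.2.1 + wtB r.2.2 := by rw [w1]
        _ = wtA r.2.1 + (wt r.1 + wtB r.2.2) := by abel
        _ = wtA r.2.1 + (wt q.1 + wtB q.2.2) := by rw [w2]
        _ = wt q.1 + wtA r.2.1 + wtB q.2.2 := by abel
        _ = wt q.1 + wtA q.2.1 + wtB q.2.2 := by rw [h4]
    calc wt p.1 + (wtA p.2.1 + wtB p.2.2) = wt p.1 + wtA p.2.1 + wtB p.2.2 := by abel
      _ = wt q.1 + wtA q.2.1 + wtB q.2.2 := this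
      _ = wt q.1 + (wtA q.2.1 + wtB q.2.2) := by abel

end Tensor5
section Reindex

variable {m : ℕ} {ι κ κ' : Type*} [Fintype ι] [DecidableEq ι] [Fintype κ] [DecidableEq κ]
  [Fintype κ'] [DecidableEq κ']

/-- reindexing equiv on the triple space. -/
def tripEquiv {ι κ κ' : Type*} (e : κ' ≃ κ) : (ι × ι × κ') ≃ (ι × ι × κ) :=
  ⟨fun p => (p.1, p.2.1, e p.2.2), fun p => (p.1, p.2.1, e.symm p.2.2),
    fun p => by simp, fun p => by simp⟩

lemma isRep_reindex (wt : ι → Fin m → ℂ) (wtW : κ → Fin m → ℂ) (η : ℂ)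
    (R : ℂ → (Fin m → ℂ) → Matrix (ι × ι) (ι × ι) ℂ)
    (L : ℂ → (Fin m → ℂ) → Matrix (ι × κ) (ι × κ) ℂ)
    (e : κ' ≃ κ) (h : IsRep wt wtW η R L) :
    IsRep wt (fun k => wtW (e k)) η R
      (fun z lam => (L z lam).submatrix (fun p => (p.1, e p.2)) (fun p => (p.1, e p.2))) := by
  obtain ⟨hRLL, hwz⟩ := h
  set E : (ι × ι × κ') ≃ (ι × ι × κ) := tripEquiv e with hE
  constructor
  · intro z₁ z₂ lam
    have h12 : ∀ c : ℂ, emb12sh (fun k => wtW (e k)) c (R (z₁ - z₂)) lam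
        = (emb12sh wtW c (R (z₁ - z₂)) lam).submatrix E E := by
      intro c; funext p q
      simp only [emb12sh, Matrix.submatrix_apply, hE, tripEquiv, Equiv.coe_fn_mk,
        EmbeddingLike.apply_eq_iff_eq]
    have h13 : ∀ (c : ℂ) (z : ℂ), emb13sh wt c
        (fun μ => (L z μ).submatrix (fun p => (p.1, e p.2)) (fun p => (p.1, e p.2))) lam
        = (emb13sh wt c (L z) lam).submatrix E E := fun c z => rfl
    have h23 : ∀ (c : ℂ) (z : ℂ), emb23sh wt c
        (fun μ => (L z μ).submatrix (fun p => (p.1, e p.2)) (fun p => (p.1, e p.2))) lam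
        = (emb23sh wt c (L z) lam).submatrix E E := fun c z => rfl
    rw [h12, h12, h13, h13, h23, h23, Matrix.submatrix_mul_equiv,
      Matrix.submatrix_mul_equiv, Matrix.submatrix_mul_equiv,
      Matrix.submatrix_mul_equiv, hRLL z₁ z₂ lam]
  · intro z lam
    apply wz_of_support
    intro p q hne
    exact wz_support (hwz z lam) hne

end Reindex

section ProdLemmas

variable {m : ℕ} {α β γ : Type*} [Fintype α] [DecidableEq α] [Fintype β] [DecidableEq β]
  [Fintype γ] [DecidableEq γ]

lemma emb13sh_one (wtb : β → Fin m → ℂ) (c : ℂ) (lam : Fin m → ℂ) :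
    emb13sh (α := α) (γ := γ) wtb c (fun _ => (1 : Matrix (α × γ) (α × γ) ℂ)) lam = 1 := by
  funext p q
  by_cases h1 : p.1 = q.1 <;> by_cases h2 : p.2.1 = q.2.1 <;> by_cases h3 : p.2.2 = q.2.2 <;>
    simp [emb13sh, Matrix.one_apply, Prod.ext_iff, h1, h2, h3]

lemma emb13sh_mul (wtb : β → Fin m → ℂ) (c : ℂ)
    (M N : (Fin m → ℂ) → Matrix (α × γ) (α × γ) ℂ) (lam : Fin m → ℂ) :
    emb13sh wtb c (fun μ => M μ * N μ) lam =
      emb13sh wtb c M lam * emb13sh wtb c N lam := by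
  funext p q
  simp only [emb13sh, Matrix.mul_apply, Fintype.sum_prod_type, mul_ite, ite_mul,
    mul_zero, zero_mul, mul_one, one_mul, Finset.sum_ite_eq, Finset.sum_ite_eq',
    Finset.mem_univ, if_true, Finset.sum_ite_irrel, Finset.sum_const_zero]
  split_ifs with h
  · rw [h]
  · rfl

lemma emb13sh_listProd (wtb : β → Fin m → ℂ) (c : ℂ)
    (fs : List ((Fin m → ℂ) → Matrix (α × γ) (α × γ) ℂ)) (lam : Fin m → ℂ) :
    emb13sh wtb c (fun μ => (fs.map (fun f => f μ)).prod) lam =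
      (fs.map (fun f => emb13sh wtb c f lam)).prod := by
  induction fs with
  | nil => simpa using emb13sh_one (α := α) (γ := γ) wtb c lam
  | cons f fs ih =>
    simp only [List.map_cons, List.prod_cons]
    rw [emb13sh_mul wtb c f (fun μ => (fs.map (fun g => g μ)).prod) lam, ih]

lemma listProd_submatrix {κ₁ κ₂ : Type*} [Fintype κ₁] [DecidableEq κ₁] [Fintype κ₂]
    [DecidableEq κ₂] (E : κ₁ ≃ κ₂) (l : List (Matrix κ₂ κ₂ ℂ)) :
    (l.map (fun M => M.submatrix ⇑E ⇑E)).prod = l.prod.submatrix ⇑E ⇑E := by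
  induction l with
  | nil => simp
  | cons M l ih =>
    simp only [List.map_cons, List.prod_cons]
    rw [ih, Matrix.submatrix_mul_equiv]

end ProdLemmas
/-- splitting off the first tensor factor. -/
def finSplit {ι : Type*} {n : ℕ} : (Fin (n + 1) → ι) ≃ ι × (Fin n → ι) :=
  ⟨fun f => (f 0, Fin.tail f), fun p => Fin.cons p.1 p.2,
    fun f => by simp, fun p => by simp⟩

/-- the induced equivalence with an auxiliary factor. -/
def prodSplit {ι : Type*} {n : ℕ} : (ι × (Fin (n + 1) → ι)) ≃ (ι × ι × (Fin n → ι)) :=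
  ⟨fun p => (p.1, p.2 0, Fin.tail p.2), fun p => (p.1, Fin.cons p.2.1 p.2.2),
    fun p => by simp, fun p => by simp⟩

section SumLemmas

variable {n : ℕ} {M : Type*} [AddCommMonoid M]

lemma sum_filter_lt_zero (g : Fin (n + 1) → M) :
    ∑ i ∈ Finset.univ.filter (fun i => i < (0 : Fin (n + 1))), g i = 0 := by
  rw [Finset.sum_filter, Fin.sum_univ_succ]
  simp [Fin.not_lt_zero]

lemma sum_filter_zero_lt (g : Fin (n + 1) → M) :
    ∑ i ∈ Finset.univ.filter (fun i => (0 : Fin (n + 1)) < i), g i =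
      ∑ j : Fin n, g j.succ := by
  rw [Finset.sum_filter, Fin.sum_univ_succ]
  simp [Fin.succ_pos, lt_irrefl]

lemma sum_filter_lt_succ (j : Fin n) (g : Fin (n + 1) → M) :
    ∑ i ∈ Finset.univ.filter (fun i => i < j.succ), g i =
      g 0 + ∑ i ∈ Finset.univ.filter (fun i : Fin n => i < j), g i.succ := by
  rw [Finset.sum_filter, Fin.sum_univ_succ, Finset.sum_filter]
  simp [Fin.succ_pos, Fin.succ_lt_succ_iff]

lemma sum_filter_succ_lt (j : Fin n) (g : Fin (n + 1) → M) :
    ∑ i ∈ Finset.univ.filter (fun i => j.succ < i), g i =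
      ∑ i ∈ Finset.univ.filter (fun i : Fin n => j < i), g i.succ := by
  rw [Finset.sum_filter, Fin.sum_univ_succ, Finset.sum_filter]
  simp [Fin.not_lt_zero, Fin.succ_lt_succ_iff]

end SumLemmas

section DeltaLemmas

variable {ι : Type*} {n : ℕ}

lemma forall_ne_zero_iff (f g : Fin (n + 1) → ι) :
    (∀ i, i ≠ 0 → f i = g i) ↔ ∀ j : Fin n, f j.succ = g j.succ := by
  constructor
  · exact fun h j => h j.succ (Fin.succ_ne_zero j)
  · intro h i hi
    rcases Fin.eq_zero_or_eq_succ i with rfl | ⟨k, rfl⟩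
    · exact absurd rfl hi
    · exact h k

lemma forall_ne_succ_iff (j : Fin n) (f g : Fin (n + 1) → ι) :
    (∀ i, i ≠ j.succ → f i = g i) ↔
      ((∀ i, i ≠ j → f i.succ = g i.succ) ∧ f 0 = g 0) := by
  constructor
  · intro h
    refine ⟨fun i hi => h i.succ (by simpa [Fin.succ_inj] using hi),
      h 0 (Ne.symm (Fin.succ_ne_zero j))⟩
  · intro h i hi
    rcases Fin.eq_zero_or_eq_succ i with rfl | ⟨k, rfl⟩
    · exact h.2
    · exact h.1 k (fun hk => hi (by rw [hk]))

lemma delta_mul {A B : Prop} [Decidable A] [Decidable B] :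
    (if A then (1 : ℂ) else 0) * (if B then 1 else 0) = if A ∧ B then 1 else 0 := by
  by_cases hA : A <;> by_cases hB : B <;> simp [hA, hB]

end DeltaLemmas
section Monodromy

variable {ι : Type*} [Fintype ι] [DecidableEq ι] {n : ℕ}

/-- the `j`-th factor `R^{(1j)}(z−z_j, λ − η Σ_{i<j} h^{(i)} + η Σ_{i>j} h^{(i)})`
of the monodromy matrix, acting on the auxiliary space `V` and the `j`-th
factor of `V^{⊗n}`. -/
def monFactor (wt : ι → (Fin m → ℂ)) (η : ℂ)
    (R : ℂ → (Fin m → ℂ) → Matrix (ι × ι) (ι × ι) ℂ)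
    (zpts : Fin n → ℂ) (j : Fin n) (z : ℂ) (lam : Fin m → ℂ) :
    Matrix (ι × (Fin n → ι)) (ι × (Fin n → ι)) ℂ :=
  fun p q =>
    R (z - zpts j)
        (lam - η • (∑ i ∈ Finset.univ.filter (fun i => i < j), wt (p.2 i))
             + η • (∑ i ∈ Finset.univ.filter (fun i => j < i), wt (p.2 i)))
        (p.1, p.2 j) (q.1, q.2 j) *
      (if ∀ i, i ≠ j → p.2 i = q.2 i then 1 else 0)

/-- the monodromy matrix `Π_{j} R^{(1j)}(z−z_j, λ − ηΣ_{i<j}h^{(i)} +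
ηΣ_{i>j}h^{(i)})`, factors ordered from left to right. -/
def monodromy (wt : ι → (Fin m → ℂ)) (η : ℂ)
    (R : ℂ → (Fin m → ℂ) → Matrix (ι × ι) (ι × ι) ℂ)
    (zpts : Fin n → ℂ) (z : ℂ) (lam : Fin m → ℂ) :
    Matrix (ι × (Fin n → ι)) (ι × (Fin n → ι)) ℂ :=
  (List.ofFn (fun j => monFactor wt η R zpts j z lam)).prod

variable (wt : ι → (Fin m → ℂ)) (η : ℂ)
  (R : ℂ → (Fin m → ℂ) → Matrix (ι × ι) (ι × ι) ℂ)

lemma claimA (zpts : Fin (n + 1) → ℂ) (z : ℂ) (lam : Fin m → ℂ) :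
    (emb12sh (fun g : Fin n → ι => ∑ j, wt (g j)) η
        (fun μ => R (z - zpts 0) μ) lam).submatrix ⇑prodSplit ⇑prodSplit =
      monFactor wt η R zpts 0 z lam := by
  funext p q
  simp only [Matrix.submatrix_apply, emb12sh, monFactor, prodSplit, Equiv.coe_fn_mk,
    sum_filter_lt_zero, sum_filter_zero_lt, smul_zero, sub_zero, Fin.tail,
    forall_ne_zero_iff, funext_iff]

lemma claimB (zpts : Fin (n + 1) → ℂ) (j : Fin n) (z : ℂ) (lam : Fin m → ℂ) :
    (emb13sh wt (-η) (monFactor wt η R (Fin.tail zpts) j z) lam).submatrix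
        ⇑prodSplit ⇑prodSplit =
      monFactor wt η R zpts j.succ z lam := by
  funext p q
  simp only [Matrix.submatrix_apply, emb13sh, monFactor, prodSplit, Equiv.coe_fn_mk,
    Fin.tail]
  simp only [mul_assoc, delta_mul, sum_filter_lt_succ, sum_filter_succ_lt]
  have harg : lam + -η • wt (p.2 0) -
        η • ∑ i ∈ Finset.univ.filter (fun i : Fin n => i < j), wt (p.2 i.succ) +
        η • ∑ i ∈ Finset.univ.filter (fun i : Fin n => j < i), wt (p.2 i.succ)
      = lam - η • (wt (p.2 0) +
        ∑ i ∈ Finset.univ.filter (fun i : Fin n => i < j), wt (p.2 i.succ)) +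
        η • ∑ i ∈ Finset.univ.filter (fun i : Fin n => j < i), wt (p.2 i.succ) := by
    rw [neg_smul, ← sub_eq_add_neg, sub_sub, ← smul_add]
  rw [harg]
  congr 1
  by_cases h1 : (∀ i : Fin n, i ≠ j → p.2 i.succ = q.2 i.succ) <;>
    by_cases h2 : p.2 0 = q.2 0 <;> simp [h1, h2, forall_ne_succ_iff j p.2 q.2] <;> congr 1

lemma emb23sh_one {α' γ' : Type*} [Fintype α'] [DecidableEq α'] [Fintype γ']
    [DecidableEq γ'] (wta : α' → Fin m → ℂ) (c : ℂ) (lam : Fin m → ℂ) :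
    emb23sh (β := ι) (γ := γ') wta c (fun _ => (1 : Matrix (ι × γ') (ι × γ') ℂ)) lam = 1 := by
  funext p q
  by_cases h1 : p.1 = q.1 <;> by_cases h2 : p.2.1 = q.2.1 <;> by_cases h3 : p.2.2 = q.2.2 <;>
    simp [emb23sh, Matrix.one_apply, Prod.ext_iff, h1, h2, h3]

lemma monodromy_succ (zpts : Fin (n + 1) → ℂ) (z : ℂ) (lam : Fin m → ℂ) :
    monodromy wt η R zpts z lam =
      (tensorL wt (fun g : Fin n → ι => ∑ j, wt (g j)) η
          (fun z lam => R (z - zpts 0) lam)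
          (monodromy wt η R (Fin.tail zpts)) z lam).submatrix
        ⇑prodSplit ⇑prodSplit := by
  simp only [tensorL]
  rw [← Matrix.submatrix_mul_equiv _ _ _ prodSplit _]
  have h2 : emb13sh wt (-η) (monodromy wt η R (Fin.tail zpts) z) lam
      = (List.ofFn fun j =>
          emb13sh wt (-η) (monFactor wt η R (Fin.tail zpts) j z) lam).prod := by
    have h0 : monodromy wt η R (Fin.tail zpts) z = fun μ =>
        (((List.ofFn fun j => monFactor wt η R (Fin.tail zpts) j z)).map
          (fun f => f μ)).prod := by
      funext μ; rw [List.map_ofFn]; rfl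
    rw [h0, emb13sh_listProd, List.map_ofFn]; rfl
  rw [h2, ← listProd_submatrix prodSplit, List.map_ofFn]
  have h3 : ((fun M : Matrix (ι × ι × (Fin n → ι)) (ι × ι × (Fin n → ι)) ℂ =>
        M.submatrix ⇑prodSplit ⇑prodSplit) ∘
        (fun j => emb13sh wt (-η) (monFactor wt η R (Fin.tail zpts) j z) lam))
      = fun j => monFactor wt η R zpts j.succ z lam :=
    funext fun j => claimB wt η R zpts j z lam
  rw [h3, claimA wt η R zpts z lam, monodromy, List.ofFn_succ, List.prod_cons]
/-- the monodromy matrix defines a representation of `A(R)` on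
`V^{⊗n}` (with the sum `𝔥`-action): it is of weight zero and satisfies the
RLL relation with `R`. -/
theorem monodromy_representation
    (wt : ι → (Fin m → ℂ)) (η : ℂ)
    (R : ℂ → (Fin m → ℂ) → Matrix (ι × ι) (ι × ι) ℂ)
    (hR : IsGenR wt η R) (zpts : Fin n → ℂ) :
    IsRep wt (fun f : Fin n → ι => ∑ i, wt (f i)) η R
      (monodromy wt η R zpts) := by
  induction n with
  | zero =>
    constructor
    · intro z₁ z₂ lam
      have h2 : ∀ z : ℂ, monodromy wt η R zpts z =
          fun _ => (1 : Matrix (ι × (Fin 0 → ι)) (ι × (Fin 0 → ι)) ℂ) := by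
        intro z; funext μ; simp [monodromy]
      rw [h2, h2]
      simp only [emb13sh_one, emb23sh_one, mul_one, one_mul]
      funext p q
      simp [emb12sh]
    · intro z lam
      have h1 : monodromy wt η R zpts z lam = 1 := by simp [monodromy]
      rw [WeightZero2, h1]
      intro X
      rw [Matrix.mul_one, Matrix.one_mul]
  | succ n ih =>
    have hbasic : IsRep wt wt η R (fun z lam => R (z - zpts 0) lam) :=
      ⟨fun z₁ z₂ lam => hR.1 z₁ z₂ (zpts 0) lam, fun z lam => hR.2.2 _ _⟩
    have htens := tensor_isRep wt wt (fun g : Fin n → ι => ∑ j, wt (g j)) η R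
      (fun z lam => R (z - zpts 0) lam) (monodromy wt η R (Fin.tail zpts))
      hbasic (ih (Fin.tail zpts))
    have htr := isRep_reindex wt _ η R _ finSplit htens
    have hL : monodromy wt η R zpts = fun z lam =>
        ((tensorL wt (fun g : Fin n → ι => ∑ j, wt (g j)) η
          (fun z lam => R (z - zpts 0) lam)
          (monodromy wt η R (Fin.tail zpts)) z lam).submatrix
          (fun p => (p.1, finSplit p.2)) (fun p => (p.1, finSplit p.2))) :=
      funext fun z => funext fun lam => monodromy_succ wt η R zpts z lam
    have hw : (fun f : Fin (n + 1) → ι => ∑ i, wt (f i)) =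
        (fun k : Fin (n + 1) → ι => wt ((finSplit k).1) + ∑ j, wt ((finSplit k).2 j)) :=
      funext fun f => by rw [Fin.sum_univ_succ]; rfl
    rw [hL, hw]
    exact htr

end Monodromy
end
end
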